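/- For λ ∈ ℂ \ {0, 1}, let π_λ be the representation of the primitive poset (5,2,1) in V = ℂ⁶ with basis e₁,…,e₆ consisting of the chain V₁ = span{e₁} ⊆ V₂ = span{e₁,e₂} ⊆ V₃ = span{e₁,e₂,e₃} ⊆ V₄ = span{e₁,e₂,e₃,e₄} ⊆ V₅ = span{e₁,e₂,e₃,e₄,e₅}, the chain V₆ = span{e₅,e₆} ⊆ V₇ = span{e₃,e₄,e₅,e₆}, and the subspace V₈ = span{e₁+e₃+e₄+e₅, λe₁+e₃+e₅+e₆, e₂+e₄}. Then each π_λ is indecomposable, and for λ ≠ μ (both in ℂ \ {0,1}) the representations π_λ and π_μ are not isomorphic; in particular the poset (5,2,1) has infinitely many pairwise non-isomorphic indecomposable representations. -/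

import Mathlib

noncomputable section

/-- A system of subspaces `A : ι → Submodule ℂ V` is decomposable if the ambient space
splits as a direct sum of two nonzero subspaces compatible with every member of the system
(internal reformulation of being isomorphic to a direct sum of two representations with
nonzero ambient spaces). -/
def IsDecomposableSystem {ι V : Type*} [AddCommGroup V] [Module ℂ V]
    (A : ι → Submodule ℂ V) : Prop :=
  ∃ U W : Submodule ℂ V, IsCompl U W ∧ U ≠ ⊥ ∧ W ≠ ⊥ ∧
    ∀ i, A i = A i ⊓ U ⊔ A i ⊓ W

/-- A system of subspaces is indecomposable if the ambient space is nonzero and the system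
is not decomposable. -/
def IsIndecomposableSystem {ι V : Type*} [AddCommGroup V] [Module ℂ V]
    (A : ι → Submodule ℂ V) : Prop :=
  (∃ v : V, v ≠ 0) ∧ ¬ IsDecomposableSystem A

/-- Two systems of subspaces are isomorphic if there is an invertible linear map carrying
each member of the first system onto the corresponding member of the second. -/
def RepIso {ι V W : Type*} [AddCommGroup V] [Module ℂ V] [AddCommGroup W] [Module ℂ W]
    (A : ι → Submodule ℂ V) (B : ι → Submodule ℂ W) : Prop :=
  ∃ C : V ≃ₗ[ℂ] W, ∀ i, (A i).map (C : V →ₗ[ℂ] W) = B i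

/-- The representation `π_λ` of the primitive poset `(5,2,1)` in `ℂ⁶`: the chain
`V₁ = span{e₁} ⊆ V₂ = span{e₁,e₂} ⊆ V₃ = span{e₁,e₂,e₃} ⊆ V₄ = span{e₁,e₂,e₃,e₄} ⊆
V₅ = span{e₁,e₂,e₃,e₄,e₅}`, the chain `V₆ = span{e₅,e₆} ⊆ V₇ = span{e₃,e₄,e₅,e₆}`, and
`V₈ = span{e₁+e₃+e₄+e₅, λe₁+e₃+e₅+e₆, e₂+e₄}` (indices `0,…,7` for `V₁,…,V₈`). -/
def piRep (lam : ℂ) : Fin 8 → Submodule ℂ (Fin 6 → ℂ) :=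
  ![Submodule.span ℂ {![1, 0, 0, 0, 0, 0]},
    Submodule.span ℂ {![1, 0, 0, 0, 0, 0], ![0, 1, 0, 0, 0, 0]},
    Submodule.span ℂ {![1, 0, 0, 0, 0, 0], ![0, 1, 0, 0, 0, 0], ![0, 0, 1, 0, 0, 0]},
    Submodule.span ℂ {![1, 0, 0, 0, 0, 0], ![0, 1, 0, 0, 0, 0], ![0, 0, 1, 0, 0, 0],
      ![0, 0, 0, 1, 0, 0]},
    Submodule.span ℂ {![1, 0, 0, 0, 0, 0], ![0, 1, 0, 0, 0, 0], ![0, 0, 1, 0, 0, 0],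
      ![0, 0, 0, 1, 0, 0], ![0, 0, 0, 0, 1, 0]},
    Submodule.span ℂ {![0, 0, 0, 0, 1, 0], ![0, 0, 0, 0, 0, 1]},
    Submodule.span ℂ {![0, 0, 1, 0, 0, 0], ![0, 0, 0, 1, 0, 0], ![0, 0, 0, 0, 1, 0],
      ![0, 0, 0, 0, 0, 1]},
    Submodule.span ℂ {![1, 0, 1, 1, 1, 0], ![lam, 0, 1, 0, 1, 1], ![0, 1, 0, 1, 0, 0]}]

@[simp] lemma my_cons_val_five {α : Type*} {m : ℕ} (x : α) (u : Fin (m + 5) → α) :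
    Matrix.vecCons x u 5 =
      Matrix.vecHead (Matrix.vecTail (Matrix.vecTail (Matrix.vecTail (Matrix.vecTail u)))) := rfl

lemma mem_dot {S : Set (Fin 6 → ℂ)} {x : Fin 6 → ℂ}
    (hx : x ∈ Submodule.span ℂ S) (w : Fin 6 → ℂ)
    (h : ∀ g ∈ S, ∑ k, w k * g k = 0) : ∑ k, w k * x k = 0 := by
  induction hx using Submodule.span_induction with
  | mem g hg => exact h g hg
  | zero => simp
  | add x y _ _ hx hy =>
      simp only [Pi.add_apply, mul_add, Finset.sum_add_distrib, hx, hy, add_zero]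
  | smul a x _ hx =>
      simp only [Pi.smul_apply, smul_eq_mul, mul_left_comm, ← Finset.mul_sum, hx, mul_zero]

lemma coordEq {S : Set (Fin 6 → ℂ)} {x : Fin 6 → ℂ} (hx : x ∈ Submodule.span ℂ S)
    (w0 w1 w2 w3 w4 w5 : ℂ)
    (h : ∀ g ∈ S, w0 * g 0 + w1 * g 1 + w2 * g 2 + w3 * g 3 + w4 * g 4 + w5 * g 5 = 0) :
    w0 * x 0 + w1 * x 1 + w2 * x 2 + w3 * x 3 + w4 * x 4 + w5 * x 5 = 0 := by
  have := mem_dot hx ![w0, w1, w2, w3, w4, w5] (by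
    intro g hg
    have := h g hg
    rw [Fin.sum_univ_six]
    simpa using this)
  rw [Fin.sum_univ_six] at this
  simpa using this

lemma expandSix (x : Fin 6 → ℂ) :
    x = x 0 • ![1,0,0,0,0,0] + x 1 • ![0,1,0,0,0,0] + x 2 • ![0,0,1,0,0,0]
      + x 3 • ![0,0,0,1,0,0] + x 4 • ![0,0,0,0,1,0] + x 5 • ![0,0,0,0,0,1] := by
  funext k; fin_cases k <;> simp

section KeyLemma
variable (lam mu : ℂ)

lemma piRep_key (lam mu : ℂ) (C : (Fin 6 → ℂ) →ₗ[ℂ] (Fin 6 → ℂ))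
    (h : ∀ i, (piRep lam i).map C ≤ piRep mu i) :
    (∀ x : Fin 6 → ℂ, C x = (C ![1,0,0,0,0,0] 0) • x) ∧
      mu * (C ![1,0,0,0,0,0] 0) = lam * (C ![1,0,0,0,0,0] 0) := by
  have h0 := h 0
  rw [show piRep lam 0 = Submodule.span ℂ {![1,0,0,0,0,0]} from rfl,
      show piRep mu 0 = Submodule.span ℂ {![1,0,0,0,0,0]} from rfl] at h0
  have h1 := h 1
  rw [show piRep lam 1 = Submodule.span ℂ {![1,0,0,0,0,0], ![0,1,0,0,0,0]} from rfl,
      show piRep mu 1 = Submodule.span ℂ {![1,0,0,0,0,0], ![0,1,0,0,0,0]} from rfl] at h1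
  have h2 := h 2
  rw [show piRep lam 2 = Submodule.span ℂ {![1,0,0,0,0,0], ![0,1,0,0,0,0], ![0,0,1,0,0,0]} from rfl,
      show piRep mu 2 = Submodule.span ℂ {![1,0,0,0,0,0], ![0,1,0,0,0,0], ![0,0,1,0,0,0]} from rfl] at h2
  have h3 := h 3
  rw [show piRep lam 3 = Submodule.span ℂ {![1,0,0,0,0,0], ![0,1,0,0,0,0], ![0,0,1,0,0,0], ![0,0,0,1,0,0]} from rfl,
      show piRep mu 3 = Submodule.span ℂ {![1,0,0,0,0,0], ![0,1,0,0,0,0], ![0,0,1,0,0,0], ![0,0,0,1,0,0]} from rfl] at h3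
  have h4 := h 4
  rw [show piRep lam 4 = Submodule.span ℂ {![1,0,0,0,0,0], ![0,1,0,0,0,0], ![0,0,1,0,0,0], ![0,0,0,1,0,0], ![0,0,0,0,1,0]} from rfl,
      show piRep mu 4 = Submodule.span ℂ {![1,0,0,0,0,0], ![0,1,0,0,0,0], ![0,0,1,0,0,0], ![0,0,0,1,0,0], ![0,0,0,0,1,0]} from rfl] at h4
  have h5 := h 5
  rw [show piRep lam 5 = Submodule.span ℂ {![0,0,0,0,1,0], ![0,0,0,0,0,1]} from rfl,
      show piRep mu 5 = Submodule.span ℂ {![0,0,0,0,1,0], ![0,0,0,0,0,1]} from rfl] at h5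
  have h6 := h 6
  rw [show piRep lam 6 = Submodule.span ℂ {![0,0,1,0,0,0], ![0,0,0,1,0,0], ![0,0,0,0,1,0], ![0,0,0,0,0,1]} from rfl,
      show piRep mu 6 = Submodule.span ℂ {![0,0,1,0,0,0], ![0,0,0,1,0,0], ![0,0,0,0,1,0], ![0,0,0,0,0,1]} from rfl] at h6
  have h7 := h 7
  rw [show piRep lam 7 = Submodule.span ℂ {![1, 0, 1, 1, 1, 0], ![lam, 0, 1, 0, 1, 1], ![0, 1, 0, 1, 0, 0]} from rfl,
      show piRep mu 7 = Submodule.span ℂ {![1, 0, 1, 1, 1, 0], ![mu, 0, 1, 0, 1, 1], ![0, 1, 0, 1, 0, 0]} from rfl] at h7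
  have m0 : C ![1,0,0,0,0,0] ∈ Submodule.span ℂ ({![1,0,0,0,0,0]} : Set (Fin 6 → ℂ)) :=
    h0 (Submodule.mem_map_of_mem (Submodule.subset_span (by simp)))
  have m1 : C ![0,1,0,0,0,0] ∈ Submodule.span ℂ ({![1,0,0,0,0,0], ![0,1,0,0,0,0]} : Set (Fin 6 → ℂ)) :=
    h1 (Submodule.mem_map_of_mem (Submodule.subset_span (by simp)))
  have m2 : C ![0,0,1,0,0,0] ∈ Submodule.span ℂ ({![1,0,0,0,0,0], ![0,1,0,0,0,0], ![0,0,1,0,0,0]} : Set (Fin 6 → ℂ)) :=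
    h2 (Submodule.mem_map_of_mem (Submodule.subset_span (by simp)))
  have m3 : C ![0,0,0,1,0,0] ∈ Submodule.span ℂ ({![1,0,0,0,0,0], ![0,1,0,0,0,0], ![0,0,1,0,0,0], ![0,0,0,1,0,0]} : Set (Fin 6 → ℂ)) :=
    h3 (Submodule.mem_map_of_mem (Submodule.subset_span (by simp)))
  have m4 : C ![0,0,0,0,1,0] ∈ Submodule.span ℂ ({![1,0,0,0,0,0], ![0,1,0,0,0,0], ![0,0,1,0,0,0], ![0,0,0,1,0,0], ![0,0,0,0,1,0]} : Set (Fin 6 → ℂ)) :=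
    h4 (Submodule.mem_map_of_mem (Submodule.subset_span (by simp)))
  have m54 : C ![0,0,0,0,1,0] ∈ Submodule.span ℂ ({![0,0,0,0,1,0], ![0,0,0,0,0,1]} : Set (Fin 6 → ℂ)) :=
    h5 (Submodule.mem_map_of_mem (Submodule.subset_span (by simp)))
  have m55 : C ![0,0,0,0,0,1] ∈ Submodule.span ℂ ({![0,0,0,0,1,0], ![0,0,0,0,0,1]} : Set (Fin 6 → ℂ)) :=
    h5 (Submodule.mem_map_of_mem (Submodule.subset_span (by simp)))
  have m62 : C ![0,0,1,0,0,0] ∈ Submodule.span ℂ ({![0,0,1,0,0,0], ![0,0,0,1,0,0], ![0,0,0,0,1,0], ![0,0,0,0,0,1]} : Set (Fin 6 → ℂ)) :=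
    h6 (Submodule.mem_map_of_mem (Submodule.subset_span (by simp)))
  have m63 : C ![0,0,0,1,0,0] ∈ Submodule.span ℂ ({![0,0,1,0,0,0], ![0,0,0,1,0,0], ![0,0,0,0,1,0], ![0,0,0,0,0,1]} : Set (Fin 6 → ℂ)) :=
    h6 (Submodule.mem_map_of_mem (Submodule.subset_span (by simp)))
  have mu7 : C ![1, 0, 1, 1, 1, 0] ∈ Submodule.span ℂ ({![1, 0, 1, 1, 1, 0], ![mu, 0, 1, 0, 1, 1], ![0, 1, 0, 1, 0, 0]} : Set (Fin 6 → ℂ)) :=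
    h7 (Submodule.mem_map_of_mem (Submodule.subset_span (by simp)))
  have mv7 : C ![lam, 0, 1, 0, 1, 1] ∈ Submodule.span ℂ ({![1, 0, 1, 1, 1, 0], ![mu, 0, 1, 0, 1, 1], ![0, 1, 0, 1, 0, 0]} : Set (Fin 6 → ℂ)) :=
    h7 (Submodule.mem_map_of_mem (Submodule.subset_span (by simp)))
  have mw7 : C ![0, 1, 0, 1, 0, 0] ∈ Submodule.span ℂ ({![1, 0, 1, 1, 1, 0], ![mu, 0, 1, 0, 1, 1], ![0, 1, 0, 1, 0, 0]} : Set (Fin 6 → ℂ)) :=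
    h7 (Submodule.mem_map_of_mem (Submodule.subset_span (by simp)))
  have q01 : C ![1,0,0,0,0,0] 1 = 0 := by
    linear_combination coordEq m0 0 1 0 0 0 0 (by intro g hg; simp only [Set.mem_insert_iff, Set.mem_singleton_iff] at hg; rcases hg with rfl <;> norm_num <;> ring)
  have q02 : C ![1,0,0,0,0,0] 2 = 0 := by
    linear_combination coordEq m0 0 0 1 0 0 0 (by intro g hg; simp only [Set.mem_insert_iff, Set.mem_singleton_iff] at hg; rcases hg with rfl <;> simp only [Matrix.cons_val] <;> norm_num <;> ring)
  have q03 : C ![1,0,0,0,0,0] 3 = 0 := by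
    linear_combination coordEq m0 0 0 0 1 0 0 (by intro g hg; simp only [Set.mem_insert_iff, Set.mem_singleton_iff] at hg; rcases hg with rfl <;> simp only [Matrix.cons_val] <;> norm_num <;> ring)
  have q04 : C ![1,0,0,0,0,0] 4 = 0 := by
    linear_combination coordEq m0 0 0 0 0 1 0 (by intro g hg; simp only [Set.mem_insert_iff, Set.mem_singleton_iff] at hg; rcases hg with rfl <;> simp only [Matrix.cons_val] <;> norm_num <;> ring)
  have q05 : C ![1,0,0,0,0,0] 5 = 0 := by
    linear_combination coordEq m0 0 0 0 0 0 1 (by intro g hg; simp only [Set.mem_insert_iff, Set.mem_singleton_iff] at hg; rcases hg with rfl <;> simp only [Matrix.cons_val] <;> norm_num <;> ring)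
  have q12 : C ![0,1,0,0,0,0] 2 = 0 := by
    linear_combination coordEq m1 0 0 1 0 0 0 (by intro g hg; simp only [Set.mem_insert_iff, Set.mem_singleton_iff] at hg; rcases hg with rfl|rfl <;> simp only [Matrix.cons_val] <;> norm_num <;> ring)
  have q13 : C ![0,1,0,0,0,0] 3 = 0 := by
    linear_combination coordEq m1 0 0 0 1 0 0 (by intro g hg; simp only [Set.mem_insert_iff, Set.mem_singleton_iff] at hg; rcases hg with rfl|rfl <;> simp only [Matrix.cons_val] <;> norm_num <;> ring)
  have q14 : C ![0,1,0,0,0,0] 4 = 0 := by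
    linear_combination coordEq m1 0 0 0 0 1 0 (by intro g hg; simp only [Set.mem_insert_iff, Set.mem_singleton_iff] at hg; rcases hg with rfl|rfl <;> simp only [Matrix.cons_val] <;> norm_num <;> ring)
  have q15 : C ![0,1,0,0,0,0] 5 = 0 := by
    linear_combination coordEq m1 0 0 0 0 0 1 (by intro g hg; simp only [Set.mem_insert_iff, Set.mem_singleton_iff] at hg; rcases hg with rfl|rfl <;> simp only [Matrix.cons_val] <;> norm_num <;> ring)
  have q23 : C ![0,0,1,0,0,0] 3 = 0 := by
    linear_combination coordEq m2 0 0 0 1 0 0 (by intro g hg; simp only [Set.mem_insert_iff, Set.mem_singleton_iff] at hg; rcases hg with rfl|rfl|rfl <;> simp only [Matrix.cons_val] <;> norm_num <;> ring)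
  have q24 : C ![0,0,1,0,0,0] 4 = 0 := by
    linear_combination coordEq m2 0 0 0 0 1 0 (by intro g hg; simp only [Set.mem_insert_iff, Set.mem_singleton_iff] at hg; rcases hg with rfl|rfl|rfl <;> simp only [Matrix.cons_val] <;> norm_num <;> ring)
  have q25 : C ![0,0,1,0,0,0] 5 = 0 := by
    linear_combination coordEq m2 0 0 0 0 0 1 (by intro g hg; simp only [Set.mem_insert_iff, Set.mem_singleton_iff] at hg; rcases hg with rfl|rfl|rfl <;> simp only [Matrix.cons_val] <;> norm_num <;> ring)
  have q34 : C ![0,0,0,1,0,0] 4 = 0 := by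
    linear_combination coordEq m3 0 0 0 0 1 0 (by intro g hg; simp only [Set.mem_insert_iff, Set.mem_singleton_iff] at hg; rcases hg with rfl|rfl|rfl|rfl <;> simp only [Matrix.cons_val] <;> norm_num <;> ring)
  have q35 : C ![0,0,0,1,0,0] 5 = 0 := by
    linear_combination coordEq m3 0 0 0 0 0 1 (by intro g hg; simp only [Set.mem_insert_iff, Set.mem_singleton_iff] at hg; rcases hg with rfl|rfl|rfl|rfl <;> simp only [Matrix.cons_val] <;> norm_num <;> ring)
  have q45 : C ![0,0,0,0,1,0] 5 = 0 := by
    linear_combination coordEq m4 0 0 0 0 0 1 (by intro g hg; simp only [Set.mem_insert_iff, Set.mem_singleton_iff] at hg; rcases hg with rfl|rfl|rfl|rfl|rfl <;> simp only [Matrix.cons_val] <;> norm_num <;> ring)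
  have q40 : C ![0,0,0,0,1,0] 0 = 0 := by
    linear_combination coordEq m54 1 0 0 0 0 0 (by intro g hg; simp only [Set.mem_insert_iff, Set.mem_singleton_iff] at hg; rcases hg with rfl|rfl <;> simp only [Matrix.cons_val] <;> norm_num <;> ring)
  have q41 : C ![0,0,0,0,1,0] 1 = 0 := by
    linear_combination coordEq m54 0 1 0 0 0 0 (by intro g hg; simp only [Set.mem_insert_iff, Set.mem_singleton_iff] at hg; rcases hg with rfl|rfl <;> simp only [Matrix.cons_val] <;> norm_num <;> ring)
  have q42 : C ![0,0,0,0,1,0] 2 = 0 := by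
    linear_combination coordEq m54 0 0 1 0 0 0 (by intro g hg; simp only [Set.mem_insert_iff, Set.mem_singleton_iff] at hg; rcases hg with rfl|rfl <;> simp only [Matrix.cons_val] <;> norm_num <;> ring)
  have q43 : C ![0,0,0,0,1,0] 3 = 0 := by
    linear_combination coordEq m54 0 0 0 1 0 0 (by intro g hg; simp only [Set.mem_insert_iff, Set.mem_singleton_iff] at hg; rcases hg with rfl|rfl <;> simp only [Matrix.cons_val] <;> norm_num <;> ring)
  have q50 : C ![0,0,0,0,0,1] 0 = 0 := by
    linear_combination coordEq m55 1 0 0 0 0 0 (by intro g hg; simp only [Set.mem_insert_iff, Set.mem_singleton_iff] at hg; rcases hg with rfl|rfl <;> simp only [Matrix.cons_val] <;> norm_num <;> ring)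
  have q51 : C ![0,0,0,0,0,1] 1 = 0 := by
    linear_combination coordEq m55 0 1 0 0 0 0 (by intro g hg; simp only [Set.mem_insert_iff, Set.mem_singleton_iff] at hg; rcases hg with rfl|rfl <;> simp only [Matrix.cons_val] <;> norm_num <;> ring)
  have q52 : C ![0,0,0,0,0,1] 2 = 0 := by
    linear_combination coordEq m55 0 0 1 0 0 0 (by intro g hg; simp only [Set.mem_insert_iff, Set.mem_singleton_iff] at hg; rcases hg with rfl|rfl <;> simp only [Matrix.cons_val] <;> norm_num <;> ring)
  have q53 : C ![0,0,0,0,0,1] 3 = 0 := by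
    linear_combination coordEq m55 0 0 0 1 0 0 (by intro g hg; simp only [Set.mem_insert_iff, Set.mem_singleton_iff] at hg; rcases hg with rfl|rfl <;> simp only [Matrix.cons_val] <;> norm_num <;> ring)
  have q20 : C ![0,0,1,0,0,0] 0 = 0 := by
    linear_combination coordEq m62 1 0 0 0 0 0 (by intro g hg; simp only [Set.mem_insert_iff, Set.mem_singleton_iff] at hg; rcases hg with rfl|rfl|rfl|rfl <;> simp only [Matrix.cons_val] <;> norm_num <;> ring)
  have q21 : C ![0,0,1,0,0,0] 1 = 0 := by
    linear_combination coordEq m62 0 1 0 0 0 0 (by intro g hg; simp only [Set.mem_insert_iff, Set.mem_singleton_iff] at hg; rcases hg with rfl|rfl|rfl|rfl <;> simp only [Matrix.cons_val] <;> norm_num <;> ring)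
  have q30 : C ![0,0,0,1,0,0] 0 = 0 := by
    linear_combination coordEq m63 1 0 0 0 0 0 (by intro g hg; simp only [Set.mem_insert_iff, Set.mem_singleton_iff] at hg; rcases hg with rfl|rfl|rfl|rfl <;> simp only [Matrix.cons_val] <;> norm_num <;> ring)
  have q31 : C ![0,0,0,1,0,0] 1 = 0 := by
    linear_combination coordEq m63 0 1 0 0 0 0 (by intro g hg; simp only [Set.mem_insert_iff, Set.mem_singleton_iff] at hg; rcases hg with rfl|rfl|rfl|rfl <;> simp only [Matrix.cons_val] <;> norm_num <;> ring)
  have hu : C ![1, 0, 1, 1, 1, 0] = C ![1,0,0,0,0,0] + C ![0,0,1,0,0,0] + C ![0,0,0,1,0,0] + C ![0,0,0,0,1,0] := by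
    rw [show (![1, 0, 1, 1, 1, 0] : Fin 6 → ℂ) = ![1,0,0,0,0,0] + ![0,0,1,0,0,0] + ![0,0,0,1,0,0] + ![0,0,0,0,1,0] by funext k; fin_cases k <;> simp]
    simp only [map_add]
  have hv : C ![lam, 0, 1, 0, 1, 1] = lam • C ![1,0,0,0,0,0] + C ![0,0,1,0,0,0] + C ![0,0,0,0,1,0] + C ![0,0,0,0,0,1] := by
    rw [show (![lam, 0, 1, 0, 1, 1] : Fin 6 → ℂ) = lam • ![1,0,0,0,0,0] + ![0,0,1,0,0,0] + ![0,0,0,0,1,0] + ![0,0,0,0,0,1] by funext k; fin_cases k <;> simp]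
    simp only [map_add, map_smul]
  have hw : C ![0, 1, 0, 1, 0, 0] = C ![0,1,0,0,0,0] + C ![0,0,0,1,0,0] := by
    rw [show (![0, 1, 0, 1, 0, 0] : Fin 6 → ℂ) = ![0,1,0,0,0,0] + ![0,0,0,1,0,0] by funext k; fin_cases k <;> simp]
    simp only [map_add]
  have U1 := coordEq mu7 0 0 1 0 (-1) 0 (by intro g hg; simp only [Set.mem_insert_iff, Set.mem_singleton_iff] at hg; rcases hg with rfl|rfl|rfl <;> simp only [Matrix.cons_val] <;> norm_num <;> ring)
  have U2 := coordEq mu7 0 (-1) 0 1 (-1) 1 (by intro g hg; simp only [Set.mem_insert_iff, Set.mem_singleton_iff] at hg; rcases hg with rfl|rfl|rfl <;> simp only [Matrix.cons_val] <;> norm_num <;> ring)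
  have U3 := coordEq mu7 1 0 0 0 (-1) (1 - mu) (by intro g hg; simp only [Set.mem_insert_iff, Set.mem_singleton_iff] at hg; rcases hg with rfl|rfl|rfl <;> simp only [Matrix.cons_val] <;> norm_num <;> ring)
  have Vv1 := coordEq mv7 0 0 1 0 (-1) 0 (by intro g hg; simp only [Set.mem_insert_iff, Set.mem_singleton_iff] at hg; rcases hg with rfl|rfl|rfl <;> simp only [Matrix.cons_val] <;> norm_num <;> ring)
  have Vv2 := coordEq mv7 0 (-1) 0 1 (-1) 1 (by intro g hg; simp only [Set.mem_insert_iff, Set.mem_singleton_iff] at hg; rcases hg with rfl|rfl|rfl <;> simp only [Matrix.cons_val] <;> norm_num <;> ring)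
  have Vv3 := coordEq mv7 1 0 0 0 (-1) (1 - mu) (by intro g hg; simp only [Set.mem_insert_iff, Set.mem_singleton_iff] at hg; rcases hg with rfl|rfl|rfl <;> simp only [Matrix.cons_val] <;> norm_num <;> ring)
  have Ww1 := coordEq mw7 0 0 1 0 (-1) 0 (by intro g hg; simp only [Set.mem_insert_iff, Set.mem_singleton_iff] at hg; rcases hg with rfl|rfl|rfl <;> simp only [Matrix.cons_val] <;> norm_num <;> ring)
  have Ww2 := coordEq mw7 0 (-1) 0 1 (-1) 1 (by intro g hg; simp only [Set.mem_insert_iff, Set.mem_singleton_iff] at hg; rcases hg with rfl|rfl|rfl <;> simp only [Matrix.cons_val] <;> norm_num <;> ring)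
  have Ww3 := coordEq mw7 1 0 0 0 (-1) (1 - mu) (by intro g hg; simp only [Set.mem_insert_iff, Set.mem_singleton_iff] at hg; rcases hg with rfl|rfl|rfl <;> simp only [Matrix.cons_val] <;> norm_num <;> ring)
  rw [hu] at U1 U2 U3
  rw [hv] at Vv1 Vv2 Vv3
  rw [hw] at Ww1 Ww2 Ww3
  simp only [Pi.add_apply, Pi.smul_apply, smul_eq_mul] at U1 U2 U3 Vv1 Vv2 Vv3 Ww1 Ww2 Ww3
  simp only [q01, q02, q03, q04, q05, q12, q13, q14, q15, q23, q24, q25, q34, q35, q45, q40, q41, q42, q43, q50, q51, q52, q53, q20, q21, q30, q31, mul_zero, zero_mul, add_zero, zero_add, mul_add, mul_one] at U1 U2 U3 Vv1 Vv2 Vv3 Ww1 Ww2 Ww3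
  have q10 : C ![0,1,0,0,0,0] 0 = 0 := by linear_combination Ww3
  have e11 : C ![0,1,0,0,0,0] 1 = C ![1,0,0,0,0,0] 0 := by linear_combination -(1:ℂ)*Ww2 + U2 - U3
  have e22 : C ![0,0,1,0,0,0] 2 = C ![1,0,0,0,0,0] 0 := by linear_combination U1 - Ww1 - U3
  have q32 : C ![0,0,0,1,0,0] 2 = 0 := by linear_combination Ww1
  have e33 : C ![0,0,0,1,0,0] 3 = C ![1,0,0,0,0,0] 0 := by linear_combination U2 - U3
  have e44 : C ![0,0,0,0,1,0] 4 = C ![1,0,0,0,0,0] 0 := by linear_combination -(1:ℂ)*U3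
  have q54 : C ![0,0,0,0,0,1] 4 = 0 := by linear_combination U1 - Ww1 - Vv1
  have e55 : C ![0,0,0,0,0,1] 5 = C ![1,0,0,0,0,0] 0 := by linear_combination Vv2 - U3 + U1 - Ww1 - Vv1
  constructor
  · -- columns
    have hcol0 : C ![1,0,0,0,0,0] = (C ![1,0,0,0,0,0] 0) • (![1,0,0,0,0,0] : Fin 6 → ℂ) := by
      have t := expandSix (C ![1,0,0,0,0,0])
      rw [q01, q02, q03, q04, q05] at t
      simp only [zero_smul, add_zero, zero_add] at t
      exact t
    have hcol1 : C ![0,1,0,0,0,0] = (C ![1,0,0,0,0,0] 0) • (![0,1,0,0,0,0] : Fin 6 → ℂ) := by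
      have t := expandSix (C ![0,1,0,0,0,0])
      rw [q10, e11, q12, q13, q14, q15] at t
      simp only [zero_smul, add_zero, zero_add] at t
      exact t
    have hcol2 : C ![0,0,1,0,0,0] = (C ![1,0,0,0,0,0] 0) • (![0,0,1,0,0,0] : Fin 6 → ℂ) := by
      have t := expandSix (C ![0,0,1,0,0,0])
      rw [q20, q21, e22, q23, q24, q25] at t
      simp only [zero_smul, add_zero, zero_add] at t
      exact t
    have hcol3 : C ![0,0,0,1,0,0] = (C ![1,0,0,0,0,0] 0) • (![0,0,0,1,0,0] : Fin 6 → ℂ) := by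
      have t := expandSix (C ![0,0,0,1,0,0])
      rw [q30, q31, q32, e33, q34, q35] at t
      simp only [zero_smul, add_zero, zero_add] at t
      exact t
    have hcol4 : C ![0,0,0,0,1,0] = (C ![1,0,0,0,0,0] 0) • (![0,0,0,0,1,0] : Fin 6 → ℂ) := by
      have t := expandSix (C ![0,0,0,0,1,0])
      rw [q40, q41, q42, q43, e44, q45] at t
      simp only [zero_smul, add_zero, zero_add] at t
      exact t
    have hcol5 : C ![0,0,0,0,0,1] = (C ![1,0,0,0,0,0] 0) • (![0,0,0,0,0,1] : Fin 6 → ℂ) := by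
      have t := expandSix (C ![0,0,0,0,0,1])
      rw [q50, q51, q52, q53, q54, e55] at t
      simp only [zero_smul, add_zero, zero_add] at t
      exact t
    intro x
    conv_lhs => rw [expandSix x]
    rw [map_add, map_add, map_add, map_add, map_add,
        map_smul, map_smul, map_smul, map_smul, map_smul, map_smul,
        hcol0, hcol1, hcol2, hcol3, hcol4, hcol5]
    funext k
    fin_cases k <;> simp [Pi.smul_apply, smul_eq_mul] <;> ring
  · linear_combination (-1 : ℂ)*Vv3 + mu*U3 - mu*U1 + mu*Ww1 + mu*Vv1 + (1-mu)*Vv2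

end KeyLemma

lemma piRep_chain (lam : ℂ) : piRep lam 0 ≤ piRep lam 1 ∧ piRep lam 1 ≤ piRep lam 2 ∧
    piRep lam 2 ≤ piRep lam 3 ∧ piRep lam 3 ≤ piRep lam 4 ∧ piRep lam 5 ≤ piRep lam 6 := by
  refine ⟨?_, ?_, ?_, ?_, ?_⟩ <;>
    exact Submodule.span_mono (by
      intro x hx
      simp only [Set.mem_insert_iff, Set.mem_singleton_iff] at hx ⊢
      tauto)

lemma piRep_indec (lam : ℂ) : IsIndecomposableSystem (piRep lam) := by
  constructor
  · exact ⟨![1,0,0,0,0,0], by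
      intro hcon
      have := congrFun hcon 0
      norm_num at this⟩
  · rintro ⟨U, W, hUW, hU, hW, hsum⟩
    set P : (Fin 6 → ℂ) →ₗ[ℂ] (Fin 6 → ℂ) := U.subtype.comp (U.linearProjOfIsCompl W hUW)
      with hPdef
    have hPU : ∀ u ∈ U, P u = u := by
      intro u hu
      exact congrArg Subtype.val (Submodule.linearProjOfIsCompl_apply_left hUW ⟨u, hu⟩)
    have hPW : ∀ w ∈ W, P w = 0 := by
      intro w hw
      exact congrArg Subtype.val (Submodule.linearProjOfIsCompl_apply_right hUW ⟨w, hw⟩)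
    have hP : ∀ i, (piRep lam i).map P ≤ piRep lam i := by
      intro i x hx
      rcases hx with ⟨y, hy, rfl⟩
      rw [hsum i] at hy
      rcases Submodule.mem_sup.mp hy with ⟨u, hu, w, hw, rfl⟩
      rw [map_add, hPU u hu.2, hPW w hw.2, add_zero]
      exact hu.1
    obtain ⟨hscal, -⟩ := piRep_key lam lam P hP
    set a : ℂ := P ![1,0,0,0,0,0] 0 with ha
    have haa : a * a = a := by
      have h1 : P (P ![1,0,0,0,0,0]) = P ![1,0,0,0,0,0] := by
        have hmem : P ![1,0,0,0,0,0] ∈ U := Submodule.coe_mem _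
        exact hPU _ hmem
      rw [hscal (P ![1,0,0,0,0,0]), hscal ![1,0,0,0,0,0]] at h1
      have := congrFun h1 0
      simpa using this
    have hcases : a = 0 ∨ a = 1 := by
      rcases mul_eq_zero.mp (show a * (a - 1) = 0 by ring_nf; linear_combination haa) with h | h
      · exact Or.inl h
      · exact Or.inr (by linear_combination h)
    rcases hcases with h | h
    · apply hU
      rw [eq_bot_iff]
      intro u hu
      have : P u = u := hPU u hu
      rw [hscal u, h, zero_smul] at this
      simpa using this.symm
    · apply hW
      rw [eq_bot_iff]
      intro w hw
      have : P w = 0 := hPW w hw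
      rw [hscal w, h, one_smul] at this
      simpa using this

lemma piRep_noniso {lam mu : ℂ} (hne : lam ≠ mu) : ¬ RepIso (piRep lam) (piRep mu) := by
  rintro ⟨C, hC⟩
  have h : ∀ i, (piRep lam i).map (C : (Fin 6 → ℂ) →ₗ[ℂ] (Fin 6 → ℂ)) ≤ piRep mu i :=
    fun i => (hC i).le
  obtain ⟨hscal, heq⟩ := piRep_key lam mu _ h
  set a : ℂ := (C : (Fin 6 → ℂ) →ₗ[ℂ] (Fin 6 → ℂ)) ![1,0,0,0,0,0] 0 with ha
  have hane : a ≠ 0 := by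
    intro h0
    have : C ![1,0,0,0,0,0] = 0 := by
      have := hscal ![1,0,0,0,0,0]
      rw [h0, zero_smul] at this
      exact this
    have h1 : (![1,0,0,0,0,0] : Fin 6 → ℂ) = 0 := by
      apply C.injective
      simpa using this
    have := congrFun h1 0
    norm_num at this
  exact hne ((mul_right_cancel₀ hane heq.symm))

/-- Each `π_λ` (λ ≠ 0, 1) is a representation of the primitive poset `(5,2,1)` and is
indecomposable, `π_λ ≇ π_μ` for `λ ≠ μ`, and in particular the poset `(5,2,1)` has
infinitely many pairwise non-isomorphic indecomposable representations. -/
theorem poset521_infinite_family :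
    (∀ lam : ℂ, piRep lam 0 ≤ piRep lam 1 ∧ piRep lam 1 ≤ piRep lam 2 ∧
      piRep lam 2 ≤ piRep lam 3 ∧ piRep lam 3 ≤ piRep lam 4 ∧
      piRep lam 5 ≤ piRep lam 6) ∧
    (∀ lam : ℂ, lam ≠ 0 → lam ≠ 1 → IsIndecomposableSystem (piRep lam)) ∧
    (∀ lam mu : ℂ, lam ≠ 0 → lam ≠ 1 → mu ≠ 0 → mu ≠ 1 → lam ≠ mu →
      ¬ RepIso (piRep lam) (piRep mu)) ∧
    (∃ f : ℕ → (Fin 8 → Submodule ℂ (Fin 6 → ℂ)),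
      (∀ n, f n 0 ≤ f n 1 ∧ f n 1 ≤ f n 2 ∧ f n 2 ≤ f n 3 ∧ f n 3 ≤ f n 4 ∧
        f n 5 ≤ f n 6) ∧
      (∀ n, IsIndecomposableSystem (f n)) ∧
      ∀ n m, n ≠ m → ¬ RepIso (f n) (f m)) := by
  refine ⟨fun lam => piRep_chain lam, fun lam _ _ => piRep_indec lam,
    fun lam mu _ _ _ _ hne => piRep_noniso hne, ⟨fun n => piRep (n : ℂ), ?_, ?_, ?_⟩⟩
  · exact fun n => piRep_chain _
  · exact fun n => piRep_indec _
  · intro n m hnm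
    apply piRep_noniso
    exact_mod_cast fun hc => hnm (Nat.cast_injective hc)
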